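/- For every positive definite Hermitian n×n complex matrix ρ and every Hermitian n×n complex matrix X, the quantity Tr[ [X,ρ] (ln ρ) X ] is a real number and is nonnegative, where [X,ρ] = Xρ − ρX. -/
import Mathlib


open Matrix BigOperators ComplexOrder

section aux

variable {n : ℕ}

private lemma vmv_mul_vmv (a b c d : Fin n → ℂ) :
    vecMulVec a b * vecMulVec c d = (b ⬝ᵥ c) • vecMulVec a d := by
  ext i j
  simp only [Matrix.mul_apply, vecMulVec_apply, Matrix.smul_apply, dotProduct, Finset.sum_mul,
    smul_eq_mul]
  exact Finset.sum_congr rfl fun k _ => by ring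

private lemma vmv_mul_mat (a b : Fin n → ℂ) (M : Matrix (Fin n) (Fin n) ℂ) :
    vecMulVec a b * M = vecMulVec a (b ᵥ* M) := by
  ext i j
  simp only [Matrix.mul_apply, vecMulVec_apply, vecMul, dotProduct, Finset.mul_sum]
  exact Finset.sum_congr rfl fun k _ => by ring

private lemma trace_vmv (a b : Fin n → ℂ) :
    Matrix.trace (vecMulVec a b) = b ⬝ᵥ a := by
  simp only [Matrix.trace, Matrix.diag, vecMulVec_apply, dotProduct]
  exact Finset.sum_congr rfl fun k _ => by ring

end aux

/-- For every positive definite Hermitian matrix `ρ = ∑ i, r i • |e i⟩⟨e i|`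
(with matrix logarithm `L = ln ρ = ∑ i, (ln r i) • |e i⟩⟨e i|`) and every Hermitian
matrix `X`, the quantity `Tr[[X,ρ] (ln ρ) X]` is real and nonnegative. -/
theorem stmt_11 {n : ℕ} (ρ : Matrix (Fin n) (Fin n) ℂ)
    (hρ : ρ.PosDef)
    (r : Fin n → ℝ) (e : Fin n → (Fin n → ℂ))
    (he : ∀ i j, star (e i) ⬝ᵥ e j = if i = j then (1 : ℂ) else 0)
    (hρd : ρ = ∑ i, (r i : ℂ) • vecMulVec (e i) (star (e i)))
    (hrpos : ∀ i, 0 < r i)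
    (L : Matrix (Fin n) (Fin n) ℂ)
    (hL : L = ∑ i, (Real.log (r i) : ℂ) • vecMulVec (e i) (star (e i)))
    (X : Matrix (Fin n) (Fin n) ℂ) (hX : Xᴴ = X) :
    (Matrix.trace ((X * ρ - ρ * X) * L * X)).im = 0
    ∧ 0 ≤ (Matrix.trace ((X * ρ - ρ * X) * L * X)).re := by
  classical
  set P : Fin n → Matrix (Fin n) (Fin n) ℂ := fun i => vecMulVec (e i) (star (e i)) with hP
  set M : Fin n → Fin n → ℂ := fun i j => star (e i) ⬝ᵥ (X *ᵥ e j) with hM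
  -- completeness of the orthonormal family
  have hcomp : (∑ j, P j) = (1 : Matrix (Fin n) (Fin n) ℂ) := by
    set U : Matrix (Fin n) (Fin n) ℂ := Matrix.of fun k j => e j k with hU
    have h1 : Uᴴ * U = 1 := by
      ext i j
      have := he i j
      simpa [Matrix.mul_apply, Matrix.conjTranspose_apply, dotProduct, Matrix.one_apply,
        hU] using this
    have h2 : U * Uᴴ = 1 := mul_eq_one_comm.mp h1
    ext k l
    have := congrFun (congrFun h2 k) l
    simpa [Matrix.mul_apply, Matrix.sum_apply, vecMulVec_apply, Matrix.conjTranspose_apply,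
      hP, hU] using this
  -- the basic trace computation
  have htr : ∀ i j, Matrix.trace (P i * X * P j * X) = M i j * M j i := by
    intro i j
    rw [hP]
    rw [vmv_mul_mat, vmv_mul_vmv, smul_mul_assoc, vmv_mul_mat, Matrix.trace_smul, trace_vmv,
      smul_eq_mul]
    rw [hM]
    simp only [Matrix.dotProduct_mulVec]
  -- trace of X * P i * X
  have hT1i : ∀ i, Matrix.trace (X * P i * X) = ∑ j, M i j * M j i := by
    intro i
    rw [← Matrix.trace_mul_cycle (P i) X X]
    have hexp : P i * X * X = ∑ j, P i * X * (P j * X) := by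
      calc P i * X * X = P i * X * ((∑ j, P j) * X) := by rw [hcomp, one_mul]
        _ = ∑ j, P i * X * (P j * X) := by rw [Finset.sum_mul, Finset.mul_sum]
    rw [hexp, Matrix.trace_sum]
    exact Finset.sum_congr rfl fun j _ => by rw [← mul_assoc, htr]
  -- ρ * L
  have hρL : ρ * L = ∑ i, ((r i : ℂ) * (Real.log (r i) : ℂ)) • P i := by
    rw [hρd, hL, Finset.sum_mul]
    refine Finset.sum_congr rfl fun a _ => ?_
    rw [Finset.mul_sum]
    rw [show (∑ b, (r a : ℂ) • vecMulVec (e a) (star (e a)) * ((Real.log (r b) : ℂ) • vecMulVec (e b) (star (e b))))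
        = ∑ b, ((r a : ℂ) * (Real.log (r b) : ℂ) * (if a = b then (1:ℂ) else 0)) • vecMulVec (e a) (star (e b)) from
      Finset.sum_congr rfl fun b _ => by
        rw [smul_mul_assoc, mul_smul_comm, vmv_mul_vmv, he, smul_smul, smul_smul]]
    rw [Finset.sum_eq_single a]
    · simp [hP]
    · intro b _ hb
      simp [Ne.symm hb]
    · simp
  -- T1
  have hT1 : Matrix.trace (X * ρ * L * X)
      = ∑ i, ∑ j, ((r i : ℂ) * (Real.log (r i) : ℂ)) * (M i j * M j i) := by
    have hrw : X * ρ * L * X = ∑ i, ((r i : ℂ) * (Real.log (r i) : ℂ)) • (X * P i * X) := by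
      rw [mul_assoc X ρ L, hρL, Finset.mul_sum, Finset.sum_mul]
      exact Finset.sum_congr rfl fun i _ => by
        rw [mul_smul_comm, smul_mul_assoc]
    rw [hrw, Matrix.trace_sum]
    simp only [Matrix.trace_smul, smul_eq_mul]
    exact Finset.sum_congr rfl fun i _ => by rw [hT1i i, Finset.mul_sum]
  -- T2
  have hT2 : Matrix.trace (ρ * X * L * X)
      = ∑ a, ∑ b, ((r a : ℂ) * (Real.log (r b) : ℂ)) * (M a b * M b a) := by
    have hrw : ρ * X * L * X = ∑ a, ∑ b, ((r a : ℂ) * (Real.log (r b) : ℂ)) • (P a * X * P b * X) := by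
      rw [hρd, hL, Finset.sum_mul, Finset.sum_mul, Finset.sum_mul]
      refine Finset.sum_congr rfl fun a _ => ?_
      rw [Finset.mul_sum, Finset.sum_mul]
      refine Finset.sum_congr rfl fun b _ => ?_
      simp only [smul_mul_assoc, mul_smul_comm, smul_smul]
      congr 1
      ring
    rw [hrw, Matrix.trace_sum]
    refine Finset.sum_congr rfl fun a _ => ?_
    rw [Matrix.trace_sum]
    refine Finset.sum_congr rfl fun b _ => ?_
    rw [Matrix.trace_smul, smul_eq_mul, htr]
  -- combination
  have key : Matrix.trace ((X * ρ - ρ * X) * L * X)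
      = ∑ i, ∑ j, (((r i - r j) * Real.log (r i) : ℝ) : ℂ) * (M i j * M j i) := by
    rw [sub_mul, sub_mul, Matrix.trace_sub, hT1, hT2]
    rw [Finset.sum_comm (s := Finset.univ) (t := Finset.univ)
      (f := fun a b => ((r a : ℂ) * (Real.log (r b) : ℂ)) * (M a b * M b a))]
    rw [← Finset.sum_sub_distrib]
    refine Finset.sum_congr rfl fun i _ => ?_
    rw [← Finset.sum_sub_distrib]
    refine Finset.sum_congr rfl fun j _ => ?_
    push_cast
    ring
  -- conjugate symmetry
  have hXc : ∀ k l, (starRingEnd ℂ) (X k l) = X l k := by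
    intro k l
    have := congrFun (congrFun hX l) k
    simpa [Matrix.conjTranspose_apply] using this
  have hMconj : ∀ i j, M j i = (starRingEnd ℂ) (M i j) := by
    intro i j
    simp only [hM, dotProduct, mulVec, Pi.star_apply, map_sum, _root_.map_mul, Complex.conj_conj,
      RCLike.star_def, hXc, Finset.mul_sum]
    rw [Finset.sum_comm]
    exact Finset.sum_congr rfl fun k _ => Finset.sum_congr rfl fun l _ => by ring
  -- realness
  have hre : Matrix.trace ((X * ρ - ρ * X) * L * X)
      = ((∑ i, ∑ j, (r i - r j) * Real.log (r i) * Complex.normSq (M i j) : ℝ) : ℂ) := by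
    rw [key]
    push_cast
    refine Finset.sum_congr rfl fun i _ => Finset.sum_congr rfl fun j _ => ?_
    rw [hMconj i j, Complex.mul_conj]
  set S : ℝ := ∑ i, ∑ j, (r i - r j) * Real.log (r i) * Complex.normSq (M i j) with hS
  have hSnn : 0 ≤ S := by
    have hS' : S = ∑ i, ∑ j, (r j - r i) * Real.log (r j) * Complex.normSq (M i j) := by
      rw [hS, Finset.sum_comm]
      refine Finset.sum_congr rfl fun i _ => Finset.sum_congr rfl fun j _ => ?_
      rw [hMconj i j, Complex.normSq_conj]
    have h2 : 2 * S = ∑ i, ∑ j,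
        (r i - r j) * (Real.log (r i) - Real.log (r j)) * Complex.normSq (M i j) := by
      calc 2 * S = S + S := by ring
        _ = (∑ i, ∑ j, (r i - r j) * Real.log (r i) * Complex.normSq (M i j))
              + ∑ i, ∑ j, (r j - r i) * Real.log (r j) * Complex.normSq (M i j) := by
            rw [← hS', ← hS]
        _ = ∑ i, ∑ j, ((r i - r j) * Real.log (r i) * Complex.normSq (M i j)
              + (r j - r i) * Real.log (r j) * Complex.normSq (M i j)) := by
            rw [← Finset.sum_add_distrib]
            exact Finset.sum_congr rfl fun i _ => by rw [← Finset.sum_add_distrib]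
        _ = _ := Finset.sum_congr rfl fun i _ => Finset.sum_congr rfl fun j _ => by ring
    have hterm : ∀ i j, 0 ≤ (r i - r j) * (Real.log (r i) - Real.log (r j)) * Complex.normSq (M i j) := by
      intro i j
      refine mul_nonneg ?_ (Complex.normSq_nonneg _)
      rcases le_total (r i) (r j) with h | h
      · have hl := Real.log_le_log (hrpos i) h
        nlinarith
      · have hl := Real.log_le_log (hrpos j) h
        exact mul_nonneg (by linarith) (by linarith)
    have : 0 ≤ 2 * S := by
      rw [h2]
      exact Finset.sum_nonneg fun i _ => Finset.sum_nonneg fun j _ => hterm i j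
    linarith
  constructor
  · rw [hre]; exact Complex.ofReal_im _
  · rw [hre, Complex.ofReal_re]; exact hSnn
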